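/- Possibility result: suppose every patient is a beneficiary of at most b sparse categories (a category c is sparse if |B_c| < q, where q is the total number of vaccines), and every category c satisfies |B_c| ≥ min{q, b·r_c}. Then there exists a matching assigning all q vaccines to beneficiaries, i.e., a matching μ with |μ⁻¹(c)| = r_c for every category c and μ(i) = c ⟹ i ∈ B_c. -/
import Mathlib


open scoped Classical

/-- Possibility result: if every patient is a beneficiary of at most `b` sparse
categories (`c` is sparse when `|B c| < q`, `q = ∑ c, r c`) and `|B c| ≥ min q (b * r c)`
for every category, then there is a matching assigning all `q` vaccines to
beneficiaries: it fills every reserve exactly and only uses beneficiaries. -/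
theorem possibility {ι κ : Type*} [Fintype ι] [Fintype κ] [DecidableEq ι]
    (r : κ → ℕ) (B : κ → Finset ι) (b : ℕ) (hb : 0 < b) (hr : ∀ c, 0 < r c)
    (hsparse : ∀ i : ι,
      (Finset.univ.filter fun c : κ => i ∈ B c ∧ (B c).card < ∑ c', r c').card ≤ b)
    (hB : ∀ c, min (∑ c', r c') (b * r c) ≤ (B c).card) :
    ∃ μ : ι → Option κ,
      (∀ c, (Finset.univ.filter fun i => μ i = some c).card = r c) ∧
      (∀ i c, μ i = some c → i ∈ B c) := by
  classical
  set q := ∑ c', r c' with hq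
  -- Hall's condition for the slot bipartite graph
  have hall : ∀ s : Finset (Σ c : κ, Fin (r c)),
      s.card ≤ (s.biUnion fun a => B a.1).card := by
    intro s
    set CA := s.image Sigma.fst with hCA
    have hN : (s.biUnion fun a => B a.1) = CA.biUnion B := by
      rw [hCA, Finset.image_biUnion]
    rw [hN]
    have hcardA : s.card ≤ ∑ c ∈ CA, r c := by
      have hsub : s ⊆ CA.sigma fun _ => Finset.univ := by
        intro a ha
        simp only [Finset.mem_sigma, Finset.mem_univ, and_true, hCA]
        exact Finset.mem_image_of_mem _ ha
      calc s.card ≤ (CA.sigma fun _ => Finset.univ).card := Finset.card_le_card hsub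
        _ = ∑ c ∈ CA, r c := by simp [Finset.card_sigma]
    by_cases hsp : ∀ c ∈ CA, (B c).card < q
    · -- all categories appearing are sparse
      have hrc : ∀ c ∈ CA, b * r c ≤ (B c).card := by
        intro c hc
        have h1 := hB c
        have h2 := hsp c hc
        rcases min_cases q (b * r c) with ⟨h3, h4⟩ | ⟨h3, h4⟩ <;> omega
      set N := CA.biUnion B with hNdef
      have hBN : ∀ c ∈ CA, B c ⊆ N := fun c hc => Finset.subset_biUnion_of_mem B hc
      have hdouble : ∑ c ∈ CA, (B c).card ≤ b * N.card := by
        have h1 : ∀ c ∈ CA, (B c).card = ∑ i ∈ N, if i ∈ B c then 1 else 0 := by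
          intro c hc
          have hfe : N.filter (· ∈ B c) = B c := by
            rw [Finset.filter_mem_eq_inter, Finset.inter_eq_right.2 (hBN c hc)]
          rw [Finset.sum_boole, Nat.cast_id, hfe]
        rw [Finset.sum_congr rfl h1, Finset.sum_comm]
        calc ∑ i ∈ N, ∑ c ∈ CA, (if i ∈ B c then 1 else 0)
            = ∑ i ∈ N, (CA.filter fun c => i ∈ B c).card := by
              refine Finset.sum_congr rfl fun i _ => ?_
              rw [Finset.sum_boole, Nat.cast_id]
          _ ≤ ∑ i ∈ N, b := by
              refine Finset.sum_le_sum fun i _ => ?_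
              refine le_trans (Finset.card_le_card ?_) (hsparse i)
              intro c hc
              simp only [Finset.mem_filter, Finset.mem_univ, true_and] at *
              exact ⟨hc.2, hsp c hc.1⟩
          _ = b * N.card := by rw [Finset.sum_const, smul_eq_mul, mul_comm]
      have key : b * s.card ≤ b * N.card := by
        calc b * s.card ≤ b * ∑ c ∈ CA, r c := Nat.mul_le_mul_left _ hcardA
          _ = ∑ c ∈ CA, b * r c := by rw [Finset.mul_sum]
          _ ≤ ∑ c ∈ CA, (B c).card := Finset.sum_le_sum hrc
          _ ≤ b * N.card := hdouble
      exact Nat.le_of_mul_le_mul_left key hb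
    · -- some non-sparse category appears
      push_neg at hsp
      obtain ⟨c, hc, hcq⟩ := hsp
      have hqN : q ≤ (CA.biUnion B).card :=
        le_trans hcq (Finset.card_le_card (Finset.subset_biUnion_of_mem B hc))
      refine le_trans (le_trans hcardA ?_) hqN
      exact Finset.sum_le_sum_of_subset (Finset.subset_univ CA)
  obtain ⟨f, hfinj, hfmem⟩ :=
    (Finset.all_card_le_biUnion_card_iff_existsInjective' (fun a : Σ c : κ, Fin (r c) => B a.1)).1
      hall
  refine ⟨fun i => if h : ∃ s, f s = i then some h.choose.1 else none, ?_, ?_⟩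
  · intro c
    have himg : (Finset.univ.filter fun i =>
        (if h : ∃ s, f s = i then some h.choose.1 else none) = some c)
        = (Finset.univ : Finset (Fin (r c))).image fun j => f ⟨c, j⟩ := by
      ext i
      simp only [Finset.mem_filter, Finset.mem_univ, true_and, Finset.mem_image]
      constructor
      · intro h
        split_ifs at h with hex
        · have hspec := hex.choose_spec
          simp only [Option.some.injEq] at h
          rcases hceq : hex.choose with ⟨c', j⟩
          rw [hceq] at hspec h
          subst h
          exact ⟨j, hspec⟩
      · rintro ⟨j, hj⟩
        have hex : ∃ s, f s = i := ⟨⟨c, j⟩, hj⟩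
        rw [dif_pos hex]
        have : hex.choose = ⟨c, j⟩ := hfinj (hex.choose_spec.trans hj.symm)
        rw [this]
    rw [himg, Finset.card_image_of_injective _ fun j j' hjj => ?_, Finset.card_univ,
      Fintype.card_fin]
    have := hfinj hjj
    exact (Sigma.mk.inj_iff.1 this).2.eq
  · intro i c h
    dsimp only at h
    split_ifs at h with hex
    · simp only [Option.some.injEq] at h
      have hspec := hex.choose_spec
      have hmem := hfmem hex.choose
      rw [h] at hmem
      rw [hspec] at hmem
      exact hmem
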